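/- For every δ > 0 and β > 0, the integral ∫_{ℝ²} ∫_{ℝ²} (1 + |ln ‖x−y‖|)² e^{−2δ‖x−y‖} e^{−2β⟨y₁⟩} e^{−2β⟨y₂⟩} dx dy is finite, where ⟨t⟩ = (1 + t²)^{1/2} and y = (y₁, y₂). -/

import Mathlib

open MeasureTheory Real Set

noncomputable section

/-- The Euclidean norm on `ℝ²` realized as `ℝ × ℝ`. -/
def eNorm2 (x : ℝ × ℝ) : ℝ := Real.sqrt (x.1 ^ 2 + x.2 ^ 2)

lemma hsk_integrable_rpow_exp {c s : ℝ} (hc : 0 < c) (hs : -1 < s) :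
    Integrable (fun t : ℝ => |t| ^ s * Real.exp (-c * |t|)) := by
  have hIoi : IntegrableOn (fun t : ℝ => |t| ^ s * Real.exp (-c * |t|)) (Ioi 0) := by
    refine (integrableOn_rpow_mul_exp_neg_mul_rpow (p := 1) hs one_pos hc).congr_fun
      (fun x hx => ?_) measurableSet_Ioi
    dsimp only; rw [Real.rpow_one, abs_of_pos hx]
  rw [← integrableOn_univ, ← Iio_union_Ici (a := (0:ℝ)), integrableOn_union,
    integrableOn_Ici_iff_integrableOn_Ioi]
  refine ⟨?_, hIoi⟩
  rw [← (Measure.measurePreserving_neg (volume : Measure ℝ)).integrableOn_comp_preimage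
      (Homeomorph.neg ℝ).measurableEmbedding]
  simp only [Function.comp_def, abs_neg, neg_preimage, neg_Iio, neg_zero]
  exact hIoi

lemma hsk_integrable_H {c : ℝ} (hc : 0 < c) :
    Integrable (fun t : ℝ => (1 + |t| ^ (-(4:ℝ)⁻¹)) * Real.exp (-c * |t|)) := by
  have h0 := hsk_integrable_rpow_exp (s := 0) hc (by norm_num)
  have h1 := hsk_integrable_rpow_exp (s := -(4:ℝ)⁻¹) hc (by norm_num)
  have h2 := h0.add h1
  refine h2.congr (Filter.Eventually.of_forall fun t => ?_)
  simp only [Pi.add_apply, Real.rpow_zero, neg_mul]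
  ring

lemma hsk_integrable_g {β : ℝ} (hβ : 0 < β) :
    Integrable (fun t : ℝ => Real.exp (-2 * β * Real.sqrt (1 + t ^ 2))) := by
  have h0 := hsk_integrable_rpow_exp (s := 0) (c := 2*β) (by positivity) (by norm_num)
  refine h0.mono' ?_ (Filter.Eventually.of_forall fun t => ?_)
  · exact (Real.continuous_exp.comp
      ((continuous_const.mul (Real.continuous_sqrt.comp
        (continuous_const.add (continuous_pow 2)))))).aestronglyMeasurable
  · simp only [Real.rpow_zero, one_mul, Real.norm_eq_abs, Real.abs_exp]
    apply Real.exp_le_exp.2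
    have h1 : |t| ≤ Real.sqrt (1 + t ^ 2) := by
      rw [← Real.sqrt_sq_eq_abs]
      exact Real.sqrt_le_sqrt (by nlinarith)
    nlinarith

lemma hsk_log_bound {δ r : ℝ} (hδ : 0 < δ) (hr : 0 < r) :
    (1 + |Real.log r|) ^ 2 * Real.exp (-2 * δ * r) ≤
      (25 * Real.exp δ + 32 / δ ^ 2) * ((1 + r ^ (-(2:ℝ)⁻¹)) * Real.exp (-δ * r)) := by
  have hrp : (0:ℝ) ≤ r ^ (-(2:ℝ)⁻¹) := Real.rpow_nonneg hr.le _
  rcases le_total r 1 with h1 | h1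
  · set u := r ^ (-(4:ℝ)⁻¹) with hu
    have hu1 : 1 ≤ u := Real.one_le_rpow_of_pos_of_le_one_of_nonpos hr h1 (by norm_num)
    have hupos : 0 < u := lt_of_lt_of_le one_pos hu1
    have hlogu : Real.log u = -(4:ℝ)⁻¹ * Real.log r := Real.log_rpow hr _
    have h2 : |Real.log r| = -Real.log r := abs_of_nonpos (Real.log_nonpos hr.le h1)
    have h4 : Real.log u ≤ u - 1 := Real.log_le_sub_one_of_pos hupos
    have h5 : 1 + |Real.log r| ≤ 5 * u := by
      rw [h2]
      have : -Real.log r = 4 * Real.log u := by rw [hlogu]; ring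
      rw [this]; nlinarith
    have h6 : u ^ 2 = r ^ (-(2:ℝ)⁻¹) := by
      rw [hu, ← Real.rpow_natCast (r ^ (-(4:ℝ)⁻¹)) 2, ← Real.rpow_mul hr.le]
      norm_num
    have he1 : Real.exp (-2 * δ * r) ≤ 1 := Real.exp_le_one_iff.2 (by nlinarith)
    have he2 : Real.exp (-δ) ≤ Real.exp (-δ * r) := Real.exp_le_exp.2 (by nlinarith)
    have hA : (1 + |Real.log r|) ^ 2 * Real.exp (-2 * δ * r) ≤ 25 * u ^ 2 := by
      have h7 : (1 + |Real.log r|) ^ 2 ≤ (5 * u) ^ 2 :=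
        pow_le_pow_left₀ (by positivity) h5 2
      calc (1 + |Real.log r|) ^ 2 * Real.exp (-2 * δ * r)
          ≤ (5 * u) ^ 2 * 1 := mul_le_mul h7 he1 (Real.exp_pos _).le (by positivity)
        _ = 25 * u ^ 2 := by ring
    refine hA.trans ?_
    have hB : 25 * u ^ 2 ≤ 25 * Real.exp δ * (u ^ 2 * Real.exp (-δ * r)) := by
      have : u ^ 2 * Real.exp (-δ) ≤ u ^ 2 * Real.exp (-δ * r) :=
        mul_le_mul_of_nonneg_left he2 (by positivity)
      have hne : Real.exp δ * Real.exp (-δ) = 1 := by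
        rw [← Real.exp_add]; simp
      nlinarith [Real.exp_pos δ]
    refine hB.trans ?_
    rw [← h6]
    have hd2 : (0:ℝ) < 32 / δ ^ 2 := by positivity
    nlinarith [mul_pos (Real.exp_pos δ) (Real.exp_pos (-δ * r)),
      mul_nonneg (mul_nonneg hd2.le (add_pos one_pos (pow_pos hupos 2)).le)
        (Real.exp_pos (-δ * r)).le]
  · -- 1 ≤ r
    have hlr : 1 + |Real.log r| ≤ r := by
      rw [abs_of_nonneg (Real.log_nonneg h1)]
      have := Real.log_le_sub_one_of_pos hr
      linarith
    have hsq : (1 + |Real.log r|) ^ 2 ≤ r ^ 2 :=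
      pow_le_pow_left₀ (by positivity) hlr 2
    have hq : (δ * r) ^ 2 / 2 ≤ Real.exp (δ * r) := by
      have h := Real.quadratic_le_exp_of_nonneg (by positivity : (0:ℝ) ≤ δ * r)
      nlinarith [mul_pos hδ hr]
    have hkey : r ^ 2 * Real.exp (-(δ * r)) ≤ 2 / δ ^ 2 := by
      have hE : Real.exp (δ * r) * Real.exp (-(δ * r)) = 1 := by
        rw [← Real.exp_add]; simp
      have hE' : 0 < Real.exp (-(δ * r)) := Real.exp_pos _
      have h8 : (δ * r) ^ 2 / 2 * Real.exp (-(δ * r)) ≤ 1 := by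
        calc (δ * r) ^ 2 / 2 * Real.exp (-(δ * r))
            ≤ Real.exp (δ * r) * Real.exp (-(δ * r)) :=
              mul_le_mul_of_nonneg_right hq hE'.le
          _ = 1 := hE
      have hδ2 : (0:ℝ) < δ ^ 2 := by positivity
      have heq : r ^ 2 * Real.exp (-(δ * r)) = ((δ * r) ^ 2 / 2 * Real.exp (-(δ * r))) * (2 / δ ^ 2) := by
        field_simp
      rw [heq]
      calc ((δ * r) ^ 2 / 2 * Real.exp (-(δ * r))) * (2 / δ ^ 2)
          ≤ 1 * (2 / δ ^ 2) := mul_le_mul_of_nonneg_right h8 (by positivity)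
        _ = 2 / δ ^ 2 := one_mul _
    calc (1 + |Real.log r|) ^ 2 * Real.exp (-2 * δ * r)
        ≤ r ^ 2 * Real.exp (-2 * δ * r) :=
          mul_le_mul_of_nonneg_right hsq (Real.exp_pos _).le
      _ = (r ^ 2 * Real.exp (-(δ * r))) * Real.exp (-δ * r) := by
          rw [show (-2 * δ * r : ℝ) = -(δ * r) + -δ * r by ring, Real.exp_add, ← mul_assoc]
      _ ≤ (2 / δ ^ 2) * Real.exp (-δ * r) :=
          mul_le_mul_of_nonneg_right hkey (Real.exp_pos _).le
      _ ≤ (25 * Real.exp δ + 32 / δ ^ 2) * ((1 + r ^ (-(2:ℝ)⁻¹)) * Real.exp (-δ * r)) := by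
          have hδ2 : (0:ℝ) < δ ^ 2 := by positivity
          have h9 : 2 / δ ^ 2 ≤ 32 / δ ^ 2 := by gcongr <;> norm_num
          have hA : (0:ℝ) ≤ (25 * Real.exp δ) * ((1 + r ^ (-(2:ℝ)⁻¹)) * Real.exp (-δ * r)) := by
            positivity
          have hB : (0:ℝ) ≤ (32 / δ ^ 2) * (r ^ (-(2:ℝ)⁻¹) * Real.exp (-δ * r)) := by
            positivity
          have hC' : (2 / δ ^ 2) * Real.exp (-δ * r) ≤ (32 / δ ^ 2) * Real.exp (-δ * r) :=
            mul_le_mul_of_nonneg_right h9 (Real.exp_pos _).le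
          nlinarith

lemma hsk_enorm_sum (z : ℝ × ℝ) : (|z.1| + |z.2|) / 2 ≤ eNorm2 z := by
  have h : ((|z.1| + |z.2|) / 2) ^ 2 ≤ z.1 ^ 2 + z.2 ^ 2 := by
    nlinarith [sq_abs z.1, sq_abs z.2, sq_nonneg (|z.1| - |z.2|), abs_nonneg z.1, abs_nonneg z.2]
  calc (|z.1| + |z.2|) / 2 = Real.sqrt (((|z.1| + |z.2|) / 2) ^ 2) :=
        (Real.sqrt_sq (by positivity)).symm
    _ ≤ Real.sqrt (z.1 ^ 2 + z.2 ^ 2) := Real.sqrt_le_sqrt h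

lemma hsk_rpow_prod {z : ℝ × ℝ} (h1 : z.1 ≠ 0) (h2 : z.2 ≠ 0) :
    (eNorm2 z) ^ (-(2:ℝ)⁻¹) ≤ |z.1| ^ (-(4:ℝ)⁻¹) * |z.2| ^ (-(4:ℝ)⁻¹) := by
  set a := |z.1| with ha
  set b := |z.2| with hb
  have hap : 0 < a := abs_pos.2 h1
  have hbp : 0 < b := abs_pos.2 h2
  have habr : Real.sqrt (a * b) ≤ eNorm2 z := by
    apply Real.sqrt_le_sqrt
    nlinarith [sq_abs z.1, sq_abs z.2, sq_nonneg (a - b)]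
  have hsp : 0 < Real.sqrt (a * b) := Real.sqrt_pos.2 (by positivity)
  have hmono : (eNorm2 z) ^ (-(2:ℝ)⁻¹) ≤ (Real.sqrt (a * b)) ^ (-(2:ℝ)⁻¹) :=
    Real.rpow_le_rpow_of_nonpos hsp habr (by norm_num)
  refine hmono.trans_eq ?_
  rw [Real.sqrt_eq_rpow, ← Real.rpow_mul (by positivity)]
  rw [show (1/2 : ℝ) * (-(2:ℝ)⁻¹) = -(4:ℝ)⁻¹ by norm_num]
  exact Real.mul_rpow hap.le hbp.le

lemma hsk_F_bound {δ : ℝ} (hδ : 0 < δ) {z : ℝ × ℝ} (h1 : z.1 ≠ 0) (h2 : z.2 ≠ 0) :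
    (1 + |Real.log (eNorm2 z)|) ^ 2 * Real.exp (-2 * δ * eNorm2 z) ≤
      (25 * Real.exp δ + 32 / δ ^ 2) *
        (((1 + |z.1| ^ (-(4:ℝ)⁻¹)) * Real.exp (-(δ/2) * |z.1|)) *
         ((1 + |z.2| ^ (-(4:ℝ)⁻¹)) * Real.exp (-(δ/2) * |z.2|))) := by
  have hC : (0:ℝ) ≤ 25 * Real.exp δ + 32 / δ ^ 2 := by positivity
  have hr : 0 < eNorm2 z := Real.sqrt_pos.2 (by positivity)
  refine (hsk_log_bound hδ hr).trans ?_
  apply mul_le_mul_of_nonneg_left ?_ hC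
  have ha : (0:ℝ) ≤ |z.1| ^ (-(4:ℝ)⁻¹) := Real.rpow_nonneg (abs_nonneg _) _
  have hb : (0:ℝ) ≤ |z.2| ^ (-(4:ℝ)⁻¹) := Real.rpow_nonneg (abs_nonneg _) _
  have hx : 1 + (eNorm2 z) ^ (-(2:ℝ)⁻¹) ≤
      (1 + |z.1| ^ (-(4:ℝ)⁻¹)) * (1 + |z.2| ^ (-(4:ℝ)⁻¹)) := by
    nlinarith [hsk_rpow_prod h1 h2]
  have he : Real.exp (-δ * eNorm2 z) ≤
      Real.exp (-(δ/2) * |z.1|) * Real.exp (-(δ/2) * |z.2|) := by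
    rw [← Real.exp_add]
    apply Real.exp_le_exp.2
    have := hsk_enorm_sum z
    nlinarith
  calc (1 + (eNorm2 z) ^ (-(2:ℝ)⁻¹)) * Real.exp (-δ * eNorm2 z)
      ≤ ((1 + |z.1| ^ (-(4:ℝ)⁻¹)) * (1 + |z.2| ^ (-(4:ℝ)⁻¹))) *
        (Real.exp (-(δ/2) * |z.1|) * Real.exp (-(δ/2) * |z.2|)) :=
        mul_le_mul hx he (Real.exp_pos _).le (by positivity)
    _ = ((1 + |z.1| ^ (-(4:ℝ)⁻¹)) * Real.exp (-(δ/2) * |z.1|)) *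
        ((1 + |z.2| ^ (-(4:ℝ)⁻¹)) * Real.exp (-(δ/2) * |z.2|)) := by ring

theorem hilbert_schmidt_kernel_integrable (δ β : ℝ) (hδ : 0 < δ) (hβ : 0 < β) :
    ∫⁻ q : (ℝ × ℝ) × (ℝ × ℝ),
      ENNReal.ofReal ((1 + |Real.log (eNorm2 (q.1 - q.2))|) ^ 2 *
        Real.exp (-2 * δ * eNorm2 (q.1 - q.2)) *
        Real.exp (-2 * β * Real.sqrt (1 + q.2.1 ^ 2)) *
        Real.exp (-2 * β * Real.sqrt (1 + q.2.2 ^ 2))) < ⊤ := by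
  set F : ℝ × ℝ → ℝ := fun z => (1 + |Real.log (eNorm2 z)|) ^ 2 * Real.exp (-2 * δ * eNorm2 z)
    with hF
  set g : ℝ → ℝ := fun t => Real.exp (-2 * β * Real.sqrt (1 + t ^ 2)) with hg
  set G : ℝ × ℝ → ℝ := fun y => g y.1 * g y.2 with hG
  have hFnonneg : ∀ z, 0 ≤ F z := fun z => by positivity
  have hEc : Continuous eNorm2 := by
    unfold eNorm2; fun_prop
  have hFmeas : Measurable F := by
    apply Measurable.mul
    · exact ((measurable_const.add
        ((Real.measurable_log.comp hEc.measurable).abs)).pow measurable_const)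
    · exact Real.measurable_exp.comp (hEc.measurable.const_mul (-2 * δ))
  have hgc : Continuous g := by
    unfold g; fun_prop
  have hGc : Continuous G := (hgc.comp continuous_fst).mul (hgc.comp continuous_snd)
  -- rewrite integrand
  have hrepr : ∀ q : (ℝ × ℝ) × (ℝ × ℝ),
      ENNReal.ofReal ((1 + |Real.log (eNorm2 (q.1 - q.2))|) ^ 2 *
        Real.exp (-2 * δ * eNorm2 (q.1 - q.2)) *
        Real.exp (-2 * β * Real.sqrt (1 + q.2.1 ^ 2)) *
        Real.exp (-2 * β * Real.sqrt (1 + q.2.2 ^ 2))) =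
      ENNReal.ofReal (F (q.1 - q.2)) * ENNReal.ofReal (G q.2) := by
    intro q
    rw [← ENNReal.ofReal_mul (hFnonneg _)]
    congr 1
    simp only [hF, hG, hg]
    ring
  simp only [hrepr]
  rw [MeasureTheory.Measure.volume_eq_prod]
  rw [lintegral_prod_symm']
  swap
  · exact (ENNReal.measurable_ofReal.comp
        (hFmeas.comp (measurable_fst.sub measurable_snd))).mul
      (ENNReal.measurable_ofReal.comp (hGc.measurable.comp measurable_snd))
  have hinner : ∀ y : ℝ × ℝ,
      (∫⁻ x, ENNReal.ofReal (F (x - y)) * ENNReal.ofReal (G y)) =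
      (∫⁻ z, ENNReal.ofReal (F z)) * ENNReal.ofReal (G y) := by
    intro y
    rw [lintegral_mul_const' _ _ ENNReal.ofReal_ne_top,
      lintegral_sub_right_eq_self (fun z => ENNReal.ofReal (F z)) y]
  simp only [hinner]
  rw [lintegral_const_mul _
    (show Measurable fun y : ℝ × ℝ => ENNReal.ofReal (G y) from
      ENNReal.measurable_ofReal.comp hGc.measurable)]
  apply ENNReal.mul_lt_top
  · -- the F integral
    set C : ℝ := 25 * Real.exp δ + 32 / δ ^ 2 with hC
    set H : ℝ → ℝ := fun t => (1 + |t| ^ (-(4:ℝ)⁻¹)) * Real.exp (-(δ/2) * |t|) with hH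
    have hHint : Integrable H := hsk_integrable_H (by positivity)
    have hbig : Integrable (fun z : ℝ × ℝ => C * (H z.1 * H z.2)) := by
      rw [MeasureTheory.Measure.volume_eq_prod]
      exact (hHint.mul_prod hHint).const_mul C
    have hz1 : ∀ᵐ z : ℝ × ℝ, z.1 ≠ 0 := by
      rw [ae_iff]
      have hset : {z : ℝ × ℝ | ¬z.1 ≠ 0} = ({0} : Set ℝ) ×ˢ (univ : Set ℝ) := by
        ext z; simp [Prod.ext_iff, eq_comm]
      rw [hset, MeasureTheory.Measure.volume_eq_prod, Measure.prod_prod]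
      simp
    have hz2 : ∀ᵐ z : ℝ × ℝ, z.2 ≠ 0 := by
      rw [ae_iff]
      have hset : {z : ℝ × ℝ | ¬z.2 ≠ 0} = (univ : Set ℝ) ×ˢ ({0} : Set ℝ) := by
        ext z; simp [Prod.ext_iff, eq_comm]
      rw [hset, MeasureTheory.Measure.volume_eq_prod, Measure.prod_prod]
      simp
    have hmono : ∀ᵐ z : ℝ × ℝ, ENNReal.ofReal (F z) ≤
        ENNReal.ofReal (C * (H z.1 * H z.2)) := by
      filter_upwards [hz1, hz2] with z h1 h2
      exact ENNReal.ofReal_le_ofReal (hsk_F_bound hδ h1 h2)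
    calc ∫⁻ z, ENNReal.ofReal (F z)
        ≤ ∫⁻ z : ℝ × ℝ, ENNReal.ofReal (C * (H z.1 * H z.2)) := lintegral_mono_ae hmono
      _ < ⊤ := hbig.lintegral_lt_top
  · -- the G integral
    have hGint : Integrable G := by
      rw [hG, MeasureTheory.Measure.volume_eq_prod]
      exact (hsk_integrable_g hβ).mul_prod (hsk_integrable_g hβ)
    exact hGint.lintegral_lt_top

end
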